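/- For every integer m ≥ 2, the alternating sum over n from 2 to m of ((-1)^n / n) times the number of ordered set partitions of {1,...,m} into n nonempty disjoint blocks equals 1. -/

import Mathlib

open scoped Classical in
/-- The number of ordered set partitions of `{1,...,m}` (modeled as `Fin m`)
into `n` nonempty pairwise disjoint blocks whose union is everything. -/
noncomputable def orderedSetPartitionCount (m n : ℕ) : ℕ :=
  Finset.card <| (Finset.univ : Finset (Fin n → Finset (Fin m))).filter
    (fun P => (∀ s, P s ≠ ∅) ∧ (∀ s t, s ≠ t → Disjoint (P s) (P t)) ∧
      Finset.univ.biUnion P = Finset.univ)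

noncomputable def surjCount (m n : ℕ) : ℕ :=
  Fintype.card {f : Fin m → Fin n // Function.Surjective f}

lemma blockEq {m n : ℕ} {P : Fin n → Finset (Fin m)}
    (hd : ∀ s t, s ≠ t → Disjoint (P s) (P t)) {i : Fin m} {s t : Fin n}
    (hs : i ∈ P s) (ht : i ∈ P t) : s = t := by
  by_contra h
  exact Finset.disjoint_left.mp (hd s t h) hs ht

noncomputable def pick {m n : ℕ} (P : Fin n → Finset (Fin m))
    (hP : Finset.univ.biUnion P = Finset.univ) (i : Fin m) : Fin n :=
  (Finset.mem_biUnion.mp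
    (show i ∈ Finset.univ.biUnion P from hP.symm ▸ Finset.mem_univ i)).choose

lemma pick_mem {m n : ℕ} (P : Fin n → Finset (Fin m))
    (hP : Finset.univ.biUnion P = Finset.univ) (i : Fin m) : i ∈ P (pick P hP i) :=
  (Finset.mem_biUnion.mp
    (show i ∈ Finset.univ.biUnion P from hP.symm ▸ Finset.mem_univ i)).choose_spec.2

open scoped Classical in
noncomputable def partEquiv (m n : ℕ) :
    {f : Fin m → Fin n // Function.Surjective f} ≃
      {P : Fin n → Finset (Fin m) //
        (∀ s, P s ≠ ∅) ∧ (∀ s t, s ≠ t → Disjoint (P s) (P t)) ∧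
          Finset.univ.biUnion P = Finset.univ} where
  toFun f := ⟨fun s => Finset.univ.filter (fun i => f.1 i = s), by
    refine ⟨fun s => ?_, fun s t hst => ?_, ?_⟩
    · obtain ⟨i, hi⟩ := f.2 s
      exact Finset.ne_empty_of_mem (Finset.mem_filter.mpr ⟨Finset.mem_univ i, hi⟩)
    · rw [Finset.disjoint_left]
      intro i hi hi'
      exact hst (((Finset.mem_filter.mp hi).2).symm.trans (Finset.mem_filter.mp hi').2)
    · ext i
      simp only [Finset.mem_biUnion]
      exact ⟨fun _ => Finset.mem_univ i, fun _ => ⟨f.1 i, Finset.mem_univ _,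
        Finset.mem_filter.mpr ⟨Finset.mem_univ _, rfl⟩⟩⟩⟩
  invFun P := ⟨pick P.1 P.2.2.2, by
    intro s
    obtain ⟨i, hi⟩ := Finset.nonempty_iff_ne_empty.mpr (P.2.1 s)
    exact ⟨i, blockEq P.2.2.1 (pick_mem P.1 P.2.2.2 i) hi⟩⟩
  left_inv f := by
    apply Subtype.ext
    funext i
    have h := pick_mem (fun s => Finset.univ.filter (fun i => f.1 i = s)) ?_ i
    · exact (Finset.mem_filter.mp h).2.symm
    · ext j
      simp only [Finset.mem_biUnion]
      exact ⟨fun _ => Finset.mem_univ j, fun _ => ⟨f.1 j, Finset.mem_univ _,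
        Finset.mem_filter.mpr ⟨Finset.mem_univ _, rfl⟩⟩⟩
  right_inv P := by
    apply Subtype.ext
    funext s
    ext i
    simp only [Finset.mem_filter, Finset.mem_univ, true_and]
    constructor
    · rintro rfl
      exact pick_mem P.1 P.2.2.2 i
    · intro hi
      exact blockEq P.2.2.1 (pick_mem P.1 P.2.2.2 i) hi

open scoped Classical in
lemma ospc_eq_surj (m n : ℕ) : orderedSetPartitionCount m n = surjCount m n := by
  rw [orderedSetPartitionCount, surjCount, ← Fintype.card_subtype]
  exact (Fintype.card_congr (partEquiv m n)).symm

lemma surj_zero_of_lt {m n : ℕ} (h : m < n) : surjCount m n = 0 := by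
  rw [surjCount, Fintype.card_eq_zero_iff]
  refine ⟨fun f => absurd (Fintype.card_le_of_surjective f.1 f.2) ?_⟩
  simpa using Nat.not_le.mpr h

lemma surj_one (m : ℕ) : surjCount (m + 1) 1 = 1 := by
  rw [surjCount, Fintype.card_eq_one_iff]
  refine ⟨⟨fun _ => 0, fun b => ⟨0, Subsingleton.elim _ _⟩⟩, fun g => ?_⟩
  exact Subtype.ext (funext fun i => Subsingleton.elim _ _)

lemma miss_aux {m n : ℕ} (f : Fin (m + 1) → Fin (n + 1)) (hf : Function.Surjective f)
    (h : ¬ Function.Surjective (fun i : Fin m => f i.castSucc)) (i : Fin m) :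
    f i.castSucc ≠ f (Fin.last m) := by
  intro heq
  apply h
  intro b
  obtain ⟨j, hj⟩ := hf b
  rcases Fin.eq_castSucc_or_eq_last j with ⟨j', rfl⟩ | rfl
  · exact ⟨j', hj⟩
  · exact ⟨i, heq.trans hj⟩

/-- The inverse-direction map for the recurrence bijection. -/
noncomputable def psi (m n : ℕ) :
    Fin (n + 1) × ({g : Fin m → Fin (n + 1) // Function.Surjective g} ⊕
      {g : Fin m → Fin n // Function.Surjective g}) →
      {f : Fin (m + 1) → Fin (n + 1) // Function.Surjective f}
  | (a, Sum.inl g) => ⟨Fin.snoc g.1 a, by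
      intro b
      obtain ⟨i, hi⟩ := g.2 b
      exact ⟨i.castSucc, by rw [Fin.snoc_castSucc]; exact hi⟩⟩
  | (a, Sum.inr g) => ⟨Fin.snoc (fun i => a.succAbove (g.1 i)) a, by
      intro b
      by_cases hb : b = a
      · exact ⟨Fin.last m, by rw [Fin.snoc_last]; exact hb.symm⟩
      · obtain ⟨i, hi⟩ := g.2 ((finSuccAboveEquiv a).symm ⟨b, hb⟩)
        refine ⟨i.castSucc, ?_⟩
        rw [Fin.snoc_castSucc, hi]
        have := (finSuccAboveEquiv a).apply_symm_apply ⟨b, hb⟩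
        rw [finSuccAboveEquiv_apply] at this
        exact congrArg Subtype.val this⟩

lemma psi_bijective (m n : ℕ) : Function.Bijective (psi m n) := by
  constructor
  · rintro ⟨a, x⟩ ⟨b, y⟩ hxy
    have hval := congrArg Subtype.val hxy
    have hab : a = b := by
      have := congrFun hval (Fin.last m)
      rcases x with g | g <;> rcases y with g' | g' <;>
        simpa [psi, Fin.snoc_last] using this
    subst hab
    have hcs : ∀ i : Fin m, (psi m n (a, x)).1 i.castSucc = (psi m n (a, y)).1 i.castSucc :=
      fun i => congrFun hval _
    rcases x with g | g <;> rcases y with g' | g'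
    · refine Prod.ext rfl (congrArg Sum.inl (Subtype.ext (funext fun i => ?_)))
      simpa [psi, Fin.snoc_castSucc] using hcs i
    · exfalso
      obtain ⟨i, hi⟩ := g.2 a
      have := hcs i
      simp only [psi, Fin.snoc_castSucc] at this
      rw [hi] at this
      exact a.succAbove_ne (g'.1 i) this.symm
    · exfalso
      obtain ⟨i, hi⟩ := g'.2 a
      have := hcs i
      simp only [psi, Fin.snoc_castSucc] at this
      rw [hi] at this
      exact a.succAbove_ne (g.1 i) this
    · refine Prod.ext rfl (congrArg Sum.inr (Subtype.ext (funext fun i => ?_)))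
      have := hcs i
      simp only [psi, Fin.snoc_castSucc] at this
      exact Fin.succAbove_right_injective this
  · rintro ⟨f, hf⟩
    by_cases h : Function.Surjective (fun i : Fin m => f i.castSucc)
    · refine ⟨(f (Fin.last m), Sum.inl ⟨fun i => f i.castSucc, h⟩), ?_⟩
      apply Subtype.ext
      exact Fin.snoc_init_self f
    · set a := f (Fin.last m) with ha
      refine ⟨(a, Sum.inr ⟨fun i => (finSuccAboveEquiv a).symm
          ⟨f i.castSucc, miss_aux f hf h i⟩, ?_⟩), ?_⟩
      · intro c
        obtain ⟨j, hj⟩ := hf (a.succAbove c)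
        rcases Fin.eq_castSucc_or_eq_last j with ⟨j', rfl⟩ | rfl
        · refine ⟨j', ?_⟩
          have hv : (⟨f j'.castSucc, miss_aux f hf h j'⟩ :
              {x : Fin (n + 1) // x ≠ a}) = finSuccAboveEquiv a c := by
            apply Subtype.ext
            simpa [finSuccAboveEquiv_apply] using hj
          dsimp only
          rw [hv, Equiv.symm_apply_apply]
        · exact absurd hj.symm (a.succAbove_ne c)
      · apply Subtype.ext
        simp only [psi]
        funext j
        rcases Fin.eq_castSucc_or_eq_last j with ⟨j', rfl⟩ | rfl
        · rw [Fin.snoc_castSucc]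
          have := (finSuccAboveEquiv a).apply_symm_apply
            ⟨f j'.castSucc, miss_aux f hf h j'⟩
          rw [finSuccAboveEquiv_apply] at this
          exact congrArg Subtype.val this
        · rw [Fin.snoc_last]

lemma surj_rec (m n : ℕ) :
    surjCount (m + 1) (n + 1) = (n + 1) * (surjCount m (n + 1) + surjCount m n) := by
  rw [surjCount, ← Fintype.card_of_bijective (psi_bijective m n)]
  simp [surjCount]

theorem stmt0 (m : ℕ) (hm : 2 ≤ m) :
    ∑ n ∈ Finset.Icc 2 m, ((-1 : ℚ) ^ n / n) * (orderedSetPartitionCount m n : ℚ) = 1 := by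
  obtain ⟨M, rfl⟩ : ∃ M, m = M + 2 := ⟨m - 2, by omega⟩
  have key : ∀ n ∈ Finset.Icc 2 (M + 2),
      ((-1 : ℚ) ^ n / n) * (orderedSetPartitionCount (M + 2) n : ℚ) =
        (-1 : ℚ) ^ n * (surjCount (M + 1) n : ℚ) -
          (-1 : ℚ) ^ (n - 1) * (surjCount (M + 1) (n - 1) : ℚ) := by
    intro n hn
    simp only [Finset.mem_Icc] at hn
    obtain ⟨k, rfl⟩ : ∃ k, n = k + 2 := ⟨n - 2, by omega⟩
    have hnn : k + 2 - 1 = k + 1 := by omega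
    rw [hnn, ospc_eq_surj]
    have hrec := surj_rec (M + 1) (k + 1)
    rw [hrec]
    push_cast
    have h2 : ((k : ℚ) + 2) ≠ 0 := by positivity
    field_simp
    ring
  rw [Finset.sum_congr rfl key]
  have hIcc : Finset.Icc 2 (M + 2) = Finset.map
      ⟨fun i => i + 2, add_left_injective 2⟩ (Finset.range (M + 1)) := by
    ext x
    simp only [Finset.mem_Icc, Finset.mem_map, Function.Embedding.coeFn_mk,
      Finset.mem_range]
    constructor
    · intro h
      exact ⟨x - 2, by omega, by omega⟩
    · rintro ⟨a, ha, rfl⟩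
      omega
  rw [hIcc, Finset.sum_map]
  simp only [Function.Embedding.coeFn_mk]
  have hsub : ∀ i : ℕ, i + 2 - 1 = i + 1 := fun i => by omega
  simp only [hsub]
  have hts : ∑ i ∈ Finset.range (M + 1),
      ((-1 : ℚ) ^ (i + 2) * (surjCount (M + 1) (i + 2) : ℚ) -
        (-1 : ℚ) ^ (i + 1) * (surjCount (M + 1) (i + 1) : ℚ)) =
      (-1 : ℚ) ^ (M + 2) * (surjCount (M + 1) (M + 2) : ℚ) -
        (-1 : ℚ) ^ 1 * (surjCount (M + 1) 1 : ℚ) :=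
    Finset.sum_range_sub
      (fun k => (-1 : ℚ) ^ (k + 1) * (surjCount (M + 1) (k + 1) : ℚ)) (M + 1)
  rw [hts, surj_zero_of_lt (show M + 1 < M + 2 by omega), surj_one M]
  norm_num
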